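/- Fix a unit vector x ∈ ℝ^d and let z_1,...,z_m be independent random vectors in ℝ^d where z_i ~ N(0, (σ²B/d) I_d) for i ≠ β and z_β ~ N(x, (σ²(B−1)/d) I_d). If d ≥ 2σ²B(√(log m) + t)², then with probability at least 1 − 3e^{−t²/4}, z_βᵀx > max_{i≠β} z_iᵀx. -/

import Mathlib

open MeasureTheory ProbabilityTheory

open scoped NNReal ENNReal

section Aux
open Real

lemma lintegral_exp_gaussian' (c μ0 : ℝ) (v : ℝ≥0) :
    ∫⁻ y, ENNReal.ofReal (Real.exp (c * y)) ∂(gaussianReal μ0 v)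
      = ENNReal.ofReal (Real.exp (c * μ0 + c ^ 2 * v / 2)) := by
  rcases eq_or_ne v 0 with hv | hv
  · subst hv
    rw [gaussianReal_zero_var, lintegral_dirac' _ (by fun_prop)]
    simp
  · have hv' : (v : ℝ) ≠ 0 := by exact_mod_cast hv
    have hv0 : (0 : ℝ) < v := lt_of_le_of_ne v.2 (Ne.symm hv')
    rw [gaussianReal_of_var_ne_zero _ hv,
      lintegral_withDensity_eq_lintegral_mul _ (measurable_gaussianPDF _ _) (by fun_prop)]
    have key : ∀ y : ℝ, (gaussianPDF μ0 v * fun y => ENNReal.ofReal (Real.exp (c * y))) y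
        = ENNReal.ofReal (Real.exp (c * μ0 + c ^ 2 * v / 2)) * gaussianPDF (μ0 + c * v) v y := by
      intro y
      simp only [Pi.mul_apply, gaussianPDF, ← ENNReal.ofReal_mul (gaussianPDFReal_nonneg _ _ _),
        ← ENNReal.ofReal_mul (Real.exp_nonneg _)]
      congr 1
      simp only [gaussianPDFReal]
      rw [mul_assoc, ← Real.exp_add, mul_left_comm, ← Real.exp_add]
      congr 2
      field_simp
      ring
    simp_rw [key]
    rw [lintegral_const_mul _ (measurable_gaussianPDF _ _), lintegral_gaussianPDF_eq_one _ hv,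
      mul_one]


lemma lintegral_pi_prod'' {ι : Type*} [Fintype ι] [DecidableEq ι] {α : ι → Type*}
    [∀ i, MeasurableSpace (α i)] (μ : ∀ i, Measure (α i)) [∀ i, SigmaFinite (μ i)]
    (x₀ : ∀ i, α i) (f : ∀ i, α i → ℝ≥0∞) (hf : ∀ i, Measurable (f i)) :
    ∫⁻ z, ∏ i, f i (z i) ∂Measure.pi μ = ∏ i, ∫⁻ y, f i y ∂μ i := by
  have hmeas : Measurable fun z : ∀ i, α i => ∏ i, f i (z i) :=
    Finset.measurable_prod _ fun i _ => (hf i).comp (measurable_pi_apply i)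
  have key : ∀ s : Finset ι, ∀ x : ∀ i, α i,
      (∫⋯∫⁻_s, (fun z => ∏ i, f i (z i)) ∂μ) x
        = (∏ i ∈ s, ∫⁻ y, f i y ∂μ i) * ∏ i ∈ sᶜ, f i (x i) := by
    intro s
    induction s using Finset.induction_on with
    | empty => intro x; simp
    | @insert j s hj ih =>
      intro x
      rw [lmarginal_insert _ hmeas hj]
      simp only [ih]
      have hsplit : ∀ y : α j, (∏ i ∈ sᶜ, f i (Function.update x j y i))
          = f j y * ∏ i ∈ sᶜ.erase j, f i (x i) := by
        intro y
        rw [← Finset.mul_prod_erase sᶜ _ (by simpa using hj)]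
        congr 1
        · simp
        · exact Finset.prod_congr rfl fun i hi => by
            rw [Function.update_of_ne (Finset.ne_of_mem_erase hi)]
      simp_rw [hsplit, mul_left_comm]
      rw [lintegral_mul_const _ (hf j), Finset.prod_insert hj, Finset.compl_insert]
      ring
  rw [lintegral_eq_lmarginal_univ x₀, key, Finset.compl_univ, Finset.prod_empty, mul_one]

lemma pi_eval_measure {ι : Type*} [Fintype ι] [DecidableEq ι] {α : ι → Type*}
    [∀ i, MeasurableSpace (α i)] (μ : ∀ i, Measure (α i)) [∀ i, IsProbabilityMeasure (μ i)]
    (i : ι) (A : Set (α i)) :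
    Measure.pi μ (Function.eval i ⁻¹' A) = μ i A := by
  rw [Set.eval_preimage, Measure.pi_pi]
  rw [Finset.prod_eq_single_of_mem i (Finset.mem_univ i)]
  · simp
  · intro j _ hji
    simp [Function.update_of_ne hji]


lemma gaussian_pi_tail {d : ℕ} (a lam : ℝ) (hlam : 0 ≤ lam) (x mu : Fin d → ℝ) (v : ℝ≥0) :
    Measure.pi (fun j => gaussianReal (mu j) v) {w : Fin d → ℝ | a ≤ ∑ j, x j * w j}
      ≤ ENNReal.ofReal (Real.exp (-(lam * a) + (lam * (∑ j, x j * mu j)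
          + lam ^ 2 * (∑ j, (x j) ^ 2) * v / 2))) := by
  set ν := Measure.pi (fun j => gaussianReal (mu j) v) with hν
  have hF : Measurable fun w : Fin d → ℝ => ∑ j, x j * w j := by fun_prop
  have hexp : Measurable fun w : Fin d → ℝ => ENNReal.ofReal (Real.exp (lam * ∑ j, x j * w j)) := by
    fun_prop
  have step1 : ENNReal.ofReal (Real.exp (lam * a)) * ν {w | a ≤ ∑ j, x j * w j}
      ≤ ∫⁻ w, ENNReal.ofReal (Real.exp (lam * ∑ j, x j * w j)) ∂ν := by
    rw [← setLIntegral_const]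
    refine le_trans (setLIntegral_mono hexp ?_) (setLIntegral_le_lintegral _ _)
    intro w hw
    exact ENNReal.ofReal_le_ofReal (Real.exp_le_exp.2 (mul_le_mul_of_nonneg_left hw hlam))
  have step2 : ∫⁻ w, ENNReal.ofReal (Real.exp (lam * ∑ j, x j * w j)) ∂ν
      = ENNReal.ofReal (Real.exp (lam * (∑ j, x j * mu j)
          + lam ^ 2 * (∑ j, (x j) ^ 2) * v / 2)) := by
    have h1 : ∀ w : Fin d → ℝ, ENNReal.ofReal (Real.exp (lam * ∑ j, x j * w j))
        = ∏ j, ENNReal.ofReal (Real.exp (lam * x j * w j)) := by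
      intro w
      rw [Finset.mul_sum, Real.exp_sum, ENNReal.ofReal_prod_of_nonneg
        (fun i _ => (Real.exp_nonneg _))]
      simp [mul_assoc]
    simp_rw [h1]
    rw [hν, lintegral_pi_prod'' _ (fun _ => 0)
      (fun j y => ENNReal.ofReal (Real.exp (lam * x j * y))) (fun j => by fun_prop)]
    simp_rw [lintegral_exp_gaussian']
    rw [← ENNReal.ofReal_prod_of_nonneg (fun i _ => (Real.exp_nonneg _)), ← Real.exp_sum]
    congr 1
    simp only [Finset.mul_sum, Finset.sum_div, Finset.sum_mul, ← Finset.sum_add_distrib]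
    congr 1
    exact Finset.sum_congr rfl fun j _ => by ring
  calc ν {w | a ≤ ∑ j, x j * w j}
      = ENNReal.ofReal (Real.exp (-(lam * a)))
        * (ENNReal.ofReal (Real.exp (lam * a)) * ν {w | a ≤ ∑ j, x j * w j}) := by
        rw [← mul_assoc, ← ENNReal.ofReal_mul (Real.exp_nonneg _), ← Real.exp_add,
          neg_add_cancel, Real.exp_zero, ENNReal.ofReal_one, one_mul]
    _ ≤ ENNReal.ofReal (Real.exp (-(lam * a)))
        * ∫⁻ w, ENNReal.ofReal (Real.exp (lam * ∑ j, x j * w j)) ∂ν :=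
        mul_le_mul_right step1 _
    _ = ENNReal.ofReal (Real.exp (-(lam * a) + (lam * (∑ j, x j * mu j)
          + lam ^ 2 * (∑ j, (x j) ^ 2) * v / 2))) := by
        rw [step2, ← ENNReal.ofReal_mul (Real.exp_nonneg _), ← Real.exp_add]

end Aux

set_option maxHeartbeats 1000000 in
/-- block detection under the random context model. -/
theorem stmt9 (d m B : ℕ) (β : Fin m) (σ t : ℝ) (hσ : 0 < σ) (hB : 1 ≤ B)
    (ht : 0 < t) (x : Fin d → ℝ) (hx : ∑ j, (x j) ^ 2 = 1)
    (hd : 2 * σ ^ 2 * B * (Real.sqrt (Real.log m) + t) ^ 2 ≤ d)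
    (μ : Measure (Fin m → Fin d → ℝ))
    (hμ : μ = Measure.pi (fun i => Measure.pi (fun jj =>
      gaussianReal (if i = β then x jj else 0)
        (if i = β then Real.toNNReal (σ ^ 2 * ((B : ℝ) - 1) / d)
          else Real.toNNReal (σ ^ 2 * B / d))))) :
    ENNReal.ofReal (1 - 3 * Real.exp (-t ^ 2 / 4)) ≤
      μ {z | ∀ i, i ≠ β → (∑ j, z i j * x j) < ∑ j, z β j * x j} := by
  subst hμ
  have hm : 0 < m := β.pos
  have hm' : (1:ℝ) ≤ m := by exact_mod_cast hm
  have hB' : (1:ℝ) ≤ B := by exact_mod_cast hB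
  set L := Real.sqrt (Real.log m) with hLdef
  have hL : 0 ≤ L := Real.sqrt_nonneg _
  have hL2 : L ^ 2 = Real.log m := Real.sq_sqrt (Real.log_nonneg hm')
  have hg : 0 < L + t := by linarith
  have hd0 : (0:ℝ) < d := by
    have hB0 : (0:ℝ) < B := by linarith
    nlinarith [mul_pos (mul_pos (mul_pos (by norm_num : (0:ℝ) < 2) (by positivity : (0:ℝ) < σ ^ 2)) hB0) (by positivity : (0:ℝ) < (L + t) ^ 2)]
  -- variances
  set v1 : ℝ≥0 := Real.toNNReal (σ ^ 2 * B / d) with hv1def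
  set v2 : ℝ≥0 := Real.toNNReal (σ ^ 2 * ((B : ℝ) - 1) / d) with hv2def
  have hv1c : (v1 : ℝ) = σ ^ 2 * B / d := Real.coe_toNNReal _ (by positivity)
  have hVle : (v1 : ℝ) ≤ 1 / (2 * (L + t) ^ 2) := by
    rw [hv1c, div_le_div_iff₀ hd0 (by positivity)]
    nlinarith
  have hv2le : (v2 : ℝ) ≤ 1 / (2 * (L + t) ^ 2) := by
    refine le_trans ?_ hVle
    rw [hv1c, Real.coe_toNNReal _ (div_nonneg (mul_nonneg (sq_nonneg σ) (by linarith)) hd0.le)]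
    gcongr
    linarith
  -- threshold and Chernoff parameters
  set θ : ℝ := (L + t / 2) / (L + t) with hθdef
  have hθg : θ * (L + t) = L + t / 2 := by
    rw [hθdef, div_mul_cancel₀ _ (ne_of_gt hg)]
  set lam1 : ℝ := 2 * (L + t) * (L + t / 2) with hlam1def
  have hlam1 : 0 ≤ lam1 := by positivity
  set lam2 : ℝ := t * (L + t) with hlam2def
  have hlam2 : 0 ≤ lam2 := by positivity
  set c : ℝ := Real.exp (-t ^ 2 / 4) with hcdef
  have hc0 : 0 < c := Real.exp_pos _
  -- the events
  set Aup : Set (Fin d → ℝ) := {w | θ ≤ ∑ j, x j * w j} with hAup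
  set Alo : Set (Fin d → ℝ) := {w | -θ ≤ ∑ j, (-(x j)) * w j} with hAlo
  set G : Set (Fin m → Fin d → ℝ) :=
    {z | ∀ i, i ≠ β → (∑ j, z i j * x j) < ∑ j, z β j * x j} with hG
  set ν : Fin m → Measure (Fin d → ℝ) := fun i => Measure.pi (fun jj =>
      gaussianReal (if i = β then x jj else 0) (if i = β then v2 else v1)) with hν
  haveI hprob : ∀ i, IsProbabilityMeasure (ν i) := fun i => by
    simp only [hν]; infer_instance
  have hGmeas : MeasurableSet G := by
    have : G = ⋂ i, ⋂ (_ : i ≠ β),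
        {z : Fin m → Fin d → ℝ | (∑ j, z i j * x j) < ∑ j, z β j * x j} := by
      ext z; simp [hG, Set.mem_iInter]
    rw [this]
    exact MeasurableSet.iInter fun i => MeasurableSet.iInter fun _ =>
      measurableSet_lt (by fun_prop) (by fun_prop)
  -- union bound inclusion
  have hincl : Gᶜ ⊆ (Function.eval β ⁻¹' Alo) ∪
      ⋃ i ∈ Finset.univ.erase β, Function.eval i ⁻¹' Aup := by
    intro z hz
    simp only [hG, Set.mem_compl_iff, Set.mem_setOf_eq, not_forall] at hz
    obtain ⟨i, hiβ, hile⟩ := hz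
    push_neg at hile
    by_cases hup : θ ≤ ∑ j, x j * z i j
    · right
      exact Set.mem_biUnion (Finset.mem_erase.2 ⟨hiβ, Finset.mem_univ i⟩) hup
    · left
      push_neg at hup
      have h1 : (∑ j, x j * z β j) = ∑ j, z β j * x j :=
        Finset.sum_congr rfl fun j _ => mul_comm _ _
      have h2 : (∑ j, x j * z i j) = ∑ j, z i j * x j :=
        Finset.sum_congr rfl fun j _ => mul_comm _ _
      have : ∑ j, x j * z β j ≤ θ := by
        rw [h1]; rw [h2] at hup; linarith
      show -θ ≤ ∑ j, -x j * z β j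
      simp only [neg_mul, Finset.sum_neg_distrib]
      linarith
  -- upper tail bound for i ≠ β
  have hup_bound : ∀ i ∈ Finset.univ.erase β,
      (Measure.pi ν) (Function.eval i ⁻¹' Aup) ≤ ENNReal.ofReal ((1 / m) * c) := by
    intro i hi
    have hiβ : i ≠ β := (Finset.mem_erase.1 hi).1
    rw [pi_eval_measure ν i Aup]
    have hνi : ν i = Measure.pi (fun _ : Fin d => gaussianReal 0 v1) := by
      simp [hν, hiβ]
    rw [hνi, hAup]
    refine le_trans (gaussian_pi_tail θ lam1 hlam1 x (fun _ => 0) v1)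
      (ENNReal.ofReal_le_ofReal ?_)
    have hsum0 : (∑ j, x j * (0:ℝ)) = 0 := by simp
    rw [hsum0, hx]
    have key : -(lam1 * θ) + (lam1 * 0 + lam1 ^ 2 * 1 * v1 / 2)
        ≤ -(Real.log m) + -t ^ 2 / 4 := by
      have h2 : lam1 ^ 2 * (v1:ℝ) ≤ lam1 ^ 2 * (1 / (2 * (L + t) ^ 2)) :=
        mul_le_mul_of_nonneg_left hVle (sq_nonneg _)
      have h3 : lam1 ^ 2 * (1 / (2 * (L + t) ^ 2)) = 2 * (L + t / 2) ^ 2 := by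
        rw [hlam1def]; field_simp
      have h4 : lam1 * θ = 2 * (L + t / 2) ^ 2 := by
        rw [hlam1def]
        calc 2 * (L + t) * (L + t / 2) * θ = 2 * (L + t / 2) * (θ * (L + t)) := by ring
          _ = 2 * (L + t / 2) ^ 2 := by rw [hθg]; ring
      have h5 : Real.log m = L ^ 2 := hL2.symm
      nlinarith [mul_nonneg hL ht.le]
    calc Real.exp (-(lam1 * θ) + (lam1 * 0 + lam1 ^ 2 * 1 * v1 / 2))
        ≤ Real.exp (-(Real.log m) + -t ^ 2 / 4) := Real.exp_le_exp.2 key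
      _ = (1 / m) * c := by
          rw [Real.exp_add, Real.exp_neg, Real.exp_log (by positivity), hcdef, one_div]
  -- lower tail bound for β
  have hlo_bound : (Measure.pi ν) (Function.eval β ⁻¹' Alo) ≤ ENNReal.ofReal c := by
    rw [pi_eval_measure ν β Alo]
    have hνβ : ν β = Measure.pi (fun jj : Fin d => gaussianReal (x jj) v2) := by
      simp [hν]
    rw [hνβ, hAlo]
    refine le_trans (gaussian_pi_tail (-θ) lam2 hlam2 (fun j => -(x j)) x v2)
      (ENNReal.ofReal_le_ofReal ?_)
    have hsum1 : (∑ j, -(x j) * x j) = -1 := by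
      simp_rw [neg_mul, ← sq]
      rw [Finset.sum_neg_distrib, hx]
    have hsum2 : (∑ j, (-(x j)) ^ 2) = 1 := by simp_rw [neg_sq]; exact hx
    rw [hsum1, hsum2]
    refine Real.exp_le_exp.2 ?_
    have hθ1 : θ - 1 = -(t / 2) / (L + t) := by rw [hθdef]; field_simp; ring
    have h2 : lam2 ^ 2 * (v2:ℝ) ≤ lam2 ^ 2 * (1 / (2 * (L + t) ^ 2)) :=
      mul_le_mul_of_nonneg_left hv2le (sq_nonneg _)
    have h3 : lam2 ^ 2 * (1 / (2 * (L + t) ^ 2)) = t ^ 2 / 2 := by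
      rw [hlam2def]; field_simp
    have h4 : lam2 * (θ - 1) = -(t ^ 2 / 2) := by
      rw [hlam2def, hθ1]; field_simp
    nlinarith
  -- combine
  have hcompl : (Measure.pi ν) Gᶜ ≤ ENNReal.ofReal (2 * c) := by
    refine le_trans (measure_mono hincl) (le_trans (measure_union_le _ _) ?_)
    have hsum : (Measure.pi ν) (⋃ i ∈ Finset.univ.erase β, Function.eval i ⁻¹' Aup)
        ≤ ENNReal.ofReal c := by
      refine le_trans (measure_biUnion_finset_le _ _) ?_
      refine le_trans (Finset.sum_le_sum hup_bound) ?_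
      rw [Finset.sum_const, Finset.card_erase_of_mem (Finset.mem_univ β),
        Finset.card_univ, Fintype.card_fin, nsmul_eq_mul]
      rw [← ENNReal.ofReal_natCast, ← ENNReal.ofReal_mul (by positivity)]
      refine ENNReal.ofReal_le_ofReal ?_
      have hcast : ((m - 1 : ℕ) : ℝ) ≤ (m : ℝ) := by exact_mod_cast Nat.sub_le m 1
      have hmpos : (0:ℝ) < m := by exact_mod_cast hm
      calc ((m - 1 : ℕ) : ℝ) * (1 / m * c) ≤ (m : ℝ) * (1 / m * c) := by
            apply mul_le_mul_of_nonneg_right hcast (by positivity)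
        _ = c := by field_simp
    calc (Measure.pi ν) (Function.eval β ⁻¹' Alo)
          + (Measure.pi ν) (⋃ i ∈ Finset.univ.erase β, Function.eval i ⁻¹' Aup)
        ≤ ENNReal.ofReal c + ENNReal.ofReal c := add_le_add hlo_bound hsum
      _ = ENNReal.ofReal (2 * c) := by rw [← ENNReal.ofReal_add hc0.le hc0.le]; ring_nf
  -- conclude
  have hone : (1:ℝ≥0∞) ≤ (Measure.pi ν) G + ENNReal.ofReal (2 * c) := by
    have hsplit := measure_add_measure_compl (μ := Measure.pi ν) hGmeas
    rw [measure_univ] at hsplit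
    calc (1:ℝ≥0∞) = (Measure.pi ν) G + (Measure.pi ν) Gᶜ := hsplit.symm
      _ ≤ (Measure.pi ν) G + ENNReal.ofReal (2 * c) := add_le_add_right hcompl _
  by_cases hcase : 1 - 3 * c ≤ 0
  · rw [ENNReal.ofReal_eq_zero.2 hcase]; exact zero_le
  · have hle : ENNReal.ofReal (1 - 3 * c) ≤ 1 - ENNReal.ofReal (2 * c) := by
      rw [← ENNReal.ofReal_one, ← ENNReal.ofReal_sub _ (by positivity)]
      exact ENNReal.ofReal_le_ofReal (by linarith)
    exact le_trans hle (tsub_le_iff_right.2 hone)
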